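/- Let A be a finite-dimensional ℤ/2ℤ-graded associative algebra over a field of characteristic zero with an odd invariant scalar product g. For a ∈ A₀ let K_a and R_a denote left and right multiplication by a (both preserve the grading), and ad_a = K_a − R_a. Then tr(K_a|_{A₁}) = tr(R_a|_{A₀}), consequently str(K_a) = −str(R_a), where str(T) = tr(T|_{A₀}) − tr(T|_{A₁}), and the following three conditions are equivalent: str(K_a) = 0; str(R_a) = 0; str(ad_a) = 0. -/

import Mathlib

lemma trace_eq_of_adjoint {k V W : Type*} [Field k] [AddCommGroup V] [Module k V]
    [AddCommGroup W] [Module k W] [FiniteDimensional k V] [FiniteDimensional k W]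
    (B : V →ₗ[k] W →ₗ[k] k) (hV : ∀ v, (∀ w, B v w = 0) → v = 0)
    (hW : ∀ w, (∀ v, B v w = 0) → w = 0)
    (f : V →ₗ[k] V) (h : W →ₗ[k] W) (hfh : ∀ v w, B (f v) w = B v (h w)) :
    LinearMap.trace k V f = LinearMap.trace k W h := by
  have hinj : Function.Injective B := by
    rw [← LinearMap.ker_eq_bot, LinearMap.ker_eq_bot']
    exact fun v hv => hV v fun w => by rw [hv]; rfl
  have hinj' : Function.Injective B.flip := by
    rw [← LinearMap.ker_eq_bot, LinearMap.ker_eq_bot']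
    exact fun w hw => hW w fun v => by
      have := congrFun (congrArg DFunLike.coe hw) v; simpa using this
  have hdim : Module.finrank k V = Module.finrank k W := by
    have h1 := LinearMap.finrank_le_finrank_of_injective hinj
    have h2 := LinearMap.finrank_le_finrank_of_injective hinj'
    rw [Subspace.dual_finrank_eq] at h1 h2
    exact le_antisymm h1 h2
  have hsurj : Function.Surjective B := by
    rw [← LinearMap.range_eq_top]
    apply Submodule.eq_top_of_finrank_eq
    rw [LinearMap.finrank_range_of_inj hinj, hdim, Subspace.dual_finrank_eq]
  let e : V ≃ₗ[k] Module.Dual k W := LinearEquiv.ofBijective B ⟨hinj, hsurj⟩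
  have key : e.conj f = Module.Dual.transpose (R := k) h := by
    ext φ w
    have hφ : (e (e.symm φ) : Module.Dual k W) = φ := e.apply_symm_apply φ
    have hB : B (e.symm φ) = φ := hφ
    simp only [LinearEquiv.conj_apply, LinearMap.comp_apply, LinearEquiv.coe_coe,
      Module.Dual.transpose_apply]
    show (B (f (e.symm φ))) w = φ (h w)
    rw [hfh, hB]
  calc LinearMap.trace k V f = LinearMap.trace k (Module.Dual k W) (e.conj f) :=
        (LinearMap.trace_conj' f e).symm
    _ = LinearMap.trace k W h := by
        rw [key]; exact LinearMap.ext_iff.mp (LinearMap.trace_transpose (R := k) (M := W)) h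



/-- A finite-dimensional ℤ/2ℤ-graded associative algebra `A = A₀ ⊕ A₁` (possibly
non-unital) with an odd invariant scalar product `g`: `g` is non-degenerate, vanishes on
`A₀ × A₀` and `A₁ × A₁`, is invariant (`g(ab,c) = g(a,bc)`) and supersymmetric (which,
given the vanishing on equal parities, amounts to plain symmetry). -/
structure OddFrob (k A : Type*) [Field k] [NonUnitalRing A] [Module k A]
    [SMulCommClass k A A] [IsScalarTower k A A] where
  A0 : Submodule k A
  A1 : Submodule k A
  compl : IsCompl A0 A1
  mul00 : ∀ x ∈ A0, ∀ y ∈ A0, x * y ∈ A0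
  mul01 : ∀ x ∈ A0, ∀ y ∈ A1, x * y ∈ A1
  mul10 : ∀ x ∈ A1, ∀ y ∈ A0, x * y ∈ A1
  mul11 : ∀ x ∈ A1, ∀ y ∈ A1, x * y ∈ A0
  g : A →ₗ[k] A →ₗ[k] k
  nondeg : ∀ x, (∀ y, g x y = 0) → x = 0
  zero00 : ∀ x ∈ A0, ∀ y ∈ A0, g x y = 0
  zero11 : ∀ x ∈ A1, ∀ y ∈ A1, g x y = 0
  invar : ∀ x y z, g (x * y) z = g x (y * z)
  symm : ∀ x y, g x y = g y x

variable {k A : Type*} [Field k] [NonUnitalRing A] [Module k A]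
  [SMulCommClass k A A] [IsScalarTower k A A]

/-- `a` is homogeneous of parity `p` (mod 2). -/
def OddFrob.Homog (S : OddFrob k A) (p : ℕ) (a : A) : Prop :=
  if p % 2 = 0 then a ∈ S.A0 else a ∈ S.A1

/-- Homogeneous dual bases `(e_μ)`, `(e^μ)` of `A`: `e^μ = f μ` is homogeneous of parity
`q μ`, `e_μ = e μ` of the opposite parity, and `g(e^μ, e_ν) = δ^μ_ν`. -/
def OddFrob.DualBases (S : OddFrob k A) {ι : Type*} [Fintype ι] [DecidableEq ι]
    (e : Module.Basis ι k A) (f : ι → A) (q : ι → ℕ) : Prop :=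
  (∀ μ, S.Homog (q μ) (f μ)) ∧ (∀ μ, S.Homog (q μ + 1) (e μ)) ∧
  (∀ μ ν, S.g (f μ) (e ν) = if μ = ν then 1 else 0)

/-- For even `a`, with `K_a`, `R_a` left/right multiplication and
`ad_a = K_a − R_a` (all preserving the grading): `tr(K_a|_{A₁}) = tr(R_a|_{A₀})`;
consequently `str(K_a) = −str(R_a)`; and `str(K_a) = 0`, `str(R_a) = 0`, `str(ad_a) = 0`
are equivalent. -/
theorem supertrace_left_right_multiplication
    {k A : Type*} [Field k] [CharZero k] [NonUnitalRing A] [Module k A]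
    [SMulCommClass k A A] [IsScalarTower k A A] [FiniteDimensional k A]
    (S : OddFrob k A) (a : A) (ha : a ∈ S.A0) :
    (LinearMap.trace k ↥S.A1 ((LinearMap.mulLeft k a).restrict
        (fun x hx => by simpa using S.mul01 a ha x hx)) =
      LinearMap.trace k ↥S.A0 ((LinearMap.mulRight k a).restrict
        (fun x hx => by simpa using S.mul00 x hx a ha))) ∧
    ((LinearMap.trace k ↥S.A0 ((LinearMap.mulLeft k a).restrict
        (fun x hx => by simpa using S.mul00 a ha x hx)) -
      LinearMap.trace k ↥S.A1 ((LinearMap.mulLeft k a).restrict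
        (fun x hx => by simpa using S.mul01 a ha x hx))) =
     - (LinearMap.trace k ↥S.A0 ((LinearMap.mulRight k a).restrict
        (fun x hx => by simpa using S.mul00 x hx a ha)) -
        LinearMap.trace k ↥S.A1 ((LinearMap.mulRight k a).restrict
        (fun x hx => by simpa using S.mul10 x hx a ha)))) ∧
    ((LinearMap.trace k ↥S.A0 ((LinearMap.mulLeft k a).restrict
        (fun x hx => by simpa using S.mul00 a ha x hx)) -
      LinearMap.trace k ↥S.A1 ((LinearMap.mulLeft k a).restrict
        (fun x hx => by simpa using S.mul01 a ha x hx)) = 0 ↔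
      LinearMap.trace k ↥S.A0 ((LinearMap.mulRight k a).restrict
        (fun x hx => by simpa using S.mul00 x hx a ha)) -
      LinearMap.trace k ↥S.A1 ((LinearMap.mulRight k a).restrict
        (fun x hx => by simpa using S.mul10 x hx a ha)) = 0) ∧
     (LinearMap.trace k ↥S.A0 ((LinearMap.mulRight k a).restrict
        (fun x hx => by simpa using S.mul00 x hx a ha)) -
      LinearMap.trace k ↥S.A1 ((LinearMap.mulRight k a).restrict
        (fun x hx => by simpa using S.mul10 x hx a ha)) = 0 ↔
      LinearMap.trace k ↥S.A0 ((LinearMap.mulLeft k a - LinearMap.mulRight k a).restrict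
        (fun x hx => by
          simp only [LinearMap.sub_apply, LinearMap.mulLeft_apply, LinearMap.mulRight_apply]
          exact sub_mem (S.mul00 a ha x hx) (S.mul00 x hx a ha))) -
      LinearMap.trace k ↥S.A1 ((LinearMap.mulLeft k a - LinearMap.mulRight k a).restrict
        (fun x hx => by
          simp only [LinearMap.sub_apply, LinearMap.mulLeft_apply, LinearMap.mulRight_apply]
          exact sub_mem (S.mul01 a ha x hx) (S.mul10 x hx a ha))) = 0)) := by
  classical
  -- decomposition of any element of A
  have hdec : ∀ z : A, ∃ z0 ∈ S.A0, ∃ z1 ∈ S.A1, z = z0 + z1 := by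
    intro z
    have hz : z ∈ S.A0 ⊔ S.A1 := by rw [S.compl.codisjoint.eq_top]; trivial
    obtain ⟨z0, hz0, z1, hz1, h⟩ := Submodule.mem_sup.mp hz
    exact ⟨z0, hz0, z1, hz1, h.symm⟩
  -- the pairings
  let B : ↥S.A0 →ₗ[k] ↥S.A1 →ₗ[k] k := (S.g.domRestrict S.A0).compl₂ S.A1.subtype
  let B' : ↥S.A1 →ₗ[k] ↥S.A0 →ₗ[k] k := (S.g.domRestrict S.A1).compl₂ S.A0.subtype
  have hB : ∀ (v : ↥S.A0) (w : ↥S.A1), B v w = S.g ↑v ↑w := fun v w => rfl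
  have hB' : ∀ (v : ↥S.A1) (w : ↥S.A0), B' v w = S.g ↑v ↑w := fun v w => rfl
  have hN0 : ∀ v : ↥S.A0, (∀ w : ↥S.A1, S.g ↑v ↑w = 0) → v = 0 := by
    intro v hv
    apply Subtype.ext
    apply S.nondeg
    intro z
    obtain ⟨z0, h0, z1, h1, rfl⟩ := hdec z
    rw [map_add, S.zero00 _ v.2 _ h0, hv ⟨z1, h1⟩, add_zero]
  have hN1 : ∀ w : ↥S.A1, (∀ v : ↥S.A0, S.g ↑v ↑w = 0) → w = 0 := by
    intro w hw
    apply Subtype.ext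
    apply S.nondeg
    intro z
    rw [S.symm]
    obtain ⟨z0, h0, z1, h1, rfl⟩ := hdec z
    rw [map_add, LinearMap.add_apply, hw ⟨z0, h0⟩, S.zero11 _ h1 _ w.2, add_zero]
  -- key trace identities
  have key1 : LinearMap.trace k ↥S.A1 ((LinearMap.mulLeft k a).restrict
        (fun x hx => by simpa using S.mul01 a ha x hx)) =
      LinearMap.trace k ↥S.A0 ((LinearMap.mulRight k a).restrict
        (fun x hx => by simpa using S.mul00 x hx a ha)) := by
    refine (trace_eq_of_adjoint B (fun v hv => hN0 v fun w => hv w)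
      (fun w hw => hN1 w fun v => hw v) _ _ ?_).symm
    intro v w
    rw [hB, hB, LinearMap.restrict_coe_apply, LinearMap.restrict_coe_apply]
    simpa using S.invar ↑v a ↑w
  have key2 : LinearMap.trace k ↥S.A0 ((LinearMap.mulLeft k a).restrict
        (fun x hx => by simpa using S.mul00 a ha x hx)) =
      LinearMap.trace k ↥S.A1 ((LinearMap.mulRight k a).restrict
        (fun x hx => by simpa using S.mul10 x hx a ha)) := by
    refine (trace_eq_of_adjoint B' (fun v hv => hN1 v fun w => by rw [S.symm]; exact hv w)
      (fun w hw => hN0 w fun v => by rw [S.symm]; exact hw v) _ _ ?_).symm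
    intro v w
    rw [hB', hB', LinearMap.restrict_coe_apply, LinearMap.restrict_coe_apply]
    simpa using S.invar ↑v a ↑w
  -- restriction of the difference
  have hsub0 : (LinearMap.mulLeft k a - LinearMap.mulRight k a).restrict
        (fun x hx => by
          simp only [LinearMap.sub_apply, LinearMap.mulLeft_apply, LinearMap.mulRight_apply]
          exact sub_mem (S.mul00 a ha x hx) (S.mul00 x hx a ha)) =
      (LinearMap.mulLeft k a).restrict (fun x hx => by simpa using S.mul00 a ha x hx) -
      (LinearMap.mulRight k a).restrict (fun x hx => by simpa using S.mul00 x hx a ha) := by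
    ext x
    simp [LinearMap.restrict_apply]
  have hsub1 : (LinearMap.mulLeft k a - LinearMap.mulRight k a).restrict
        (fun x hx => by
          simp only [LinearMap.sub_apply, LinearMap.mulLeft_apply, LinearMap.mulRight_apply]
          exact sub_mem (S.mul01 a ha x hx) (S.mul10 x hx a ha)) =
      (LinearMap.mulLeft k a).restrict (fun x hx => by simpa using S.mul01 a ha x hx) -
      (LinearMap.mulRight k a).restrict (fun x hx => by simpa using S.mul10 x hx a ha) := by
    ext x
    simp [LinearMap.restrict_apply]
  refine ⟨key1, by rw [key1, key2]; ring, ?_, ?_⟩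
  · rw [key1, key2]
    constructor <;> intro h <;> linear_combination -h
  · rw [hsub0, hsub1, map_sub, map_sub, key1, key2]
    constructor
    · intro h; linear_combination -2 * h
    · intro h; linear_combination (-1/2 : k) * h
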